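/- arXiv:2010.10736 — 8 statements merged into one kernel-verified Lean document; each statement's English description precedes it below -/
import Mathlib

section
/- Let F be a convex subset of a Hausdorff locally convex topological vector space X with 0 in the interior of F, and let Ω be a nonempty subset of X. If F is bounded (in the topological vector space sense), then the F-closure cl_F(Ω) := ⋂_{ε>0} (Ω − ε·F) equals the topological closure of Ω. -/
open Set Filter Topology Pointwise

variable {X : Type*} [AddCommGroup X] [Module ℝ X] [TopologicalSpace X]
  [IsTopologicalAddGroup X] [ContinuousSMul ℝ X] [T2Space X] [LocallyConvexSpace ℝ X]

/-- If the dynamics F is bounded, the F-closure of Ω coincides with the topological closure. -/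
theorem clF_eq_closure (F Ω : Set X) (hconv : Convex ℝ F) (h0 : (0 : X) ∈ interior F)
    (hΩ : Ω.Nonempty) (hbd : Bornology.IsVonNBounded ℝ F) :
    {x : X | ∀ ε : ℝ, 0 < ε → ∃ ω ∈ Ω, ∃ f ∈ F, x = ω - ε • f} = closure Ω := by
  ext x
  simp only [mem_setOf_eq]
  constructor
  · intro hx
    rw [mem_closure_iff_nhds]
    intro U hU
    have hV : (fun v : X => x + v) ⁻¹' U ∈ 𝓝 (0 : X) := by
      have hcont : Continuous (fun v : X => x + v) := continuous_const.add continuous_id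
      have := hcont.continuousAt (x := (0 : X))
      exact this (show U ∈ 𝓝 (x + 0) by simpa using hU)
    obtain ⟨r, hr⟩ := absorbs_iff_norm.1 (hbd hV)
    set a : ℝ := max r 1 with ha
    have ha1 : (1 : ℝ) ≤ a := le_max_right _ _
    have hapos : 0 < a := lt_of_lt_of_le one_pos ha1
    have hFa : F ⊆ a • ((fun v : X => x + v) ⁻¹' U) := by
      apply hr
      rw [Real.norm_eq_abs, abs_of_pos hapos]
      exact le_max_left _ _
    obtain ⟨ω, hω, f, hf, hxe⟩ := hx (1 / a) (by positivity)
    obtain ⟨v, hv, hfv⟩ := hFa hf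
    refine ⟨ω, ?_, hω⟩
    have : ω = x + v := by
      have : ω = x + (1 / a) • f := by rw [hxe]; abel
      rw [this, ← hfv, smul_smul, one_div_mul_cancel hapos.ne', one_smul]
    rw [this]
    exact hv
  · intro hx ε hε
    have hopen : IsOpen (x +ᵥ ε • interior F) := by
      have h1 := isOpen_interior (s := F) |>.smul₀ hε.ne'
      exact h1.vadd x
    have hxmem : x ∈ x +ᵥ ε • interior F :=
      ⟨ε • 0, smul_mem_smul_set h0, by simp⟩
    obtain ⟨ω, hω⟩ := mem_closure_iff.1 hx _ hopen hxmem
    obtain ⟨hω1, hω2⟩ := hω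
    obtain ⟨_, ⟨f, hf, rfl⟩, rfl⟩ := hω1
    exact ⟨x +ᵥ ε • f, hω2, f, interior_subset hf, by simp [vadd_eq_add]⟩
end

section
/- Let F be a closed convex subset of a Hausdorff locally convex topological vector space X with 0 ∈ int(F), and let Ω be a sequentially compact subset of X. Then cl_F(Ω) = Ω − F_∞, where F_∞ is the horizon cone of F. -/
open Set Filter Topology Pointwise

variable {X : Type*} [AddCommGroup X] [Module ℝ X] [TopologicalSpace X]
  [IsTopologicalAddGroup X] [ContinuousSMul ℝ X] [T2Space X] [LocallyConvexSpace ℝ X]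

/-- For sequentially compact Ω, the F-closure of Ω equals Ω − F_∞. -/
theorem clF_eq_sub_horizon (F Ω : Set X) (hcl : IsClosed F) (hconv : Convex ℝ F)
    (h0 : (0 : X) ∈ interior F) (hΩne : Ω.Nonempty) (hΩ : IsSeqCompact Ω) :
    {x : X | ∀ ε : ℝ, 0 < ε → ∃ ω ∈ Ω, ∃ f ∈ F, x = ω - ε • f} =
      {x : X | ∃ ω ∈ Ω, ∃ d ∈ ⋂ t ∈ Set.Ioi (0 : ℝ), t • F, x = ω - d} := by
  have h0F : (0 : X) ∈ F := interior_subset h0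
  ext x
  simp only [mem_setOf_eq]
  constructor
  · intro hx
    choose ω hω f hf hxe using fun n : ℕ =>
      hx (1 / ((n : ℝ) + 1)) (by positivity)
    obtain ⟨a, haΩ, φ, hφ, hconv'⟩ := hΩ hω
    refine ⟨a, haΩ, a - x, ?_, by abel⟩
    simp only [mem_iInter, mem_Ioi]
    intro t ht
    rw [mem_smul_set_iff_inv_smul_mem₀ ht.ne']
    have key : Tendsto (fun k => t⁻¹ • (ω (φ k) - x)) atTop (𝓝 (t⁻¹ • (a - x))) :=
      ((hconv'.sub_const x).const_smul t⁻¹)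
    refine hcl.mem_of_tendsto key ?_
    obtain ⟨N, hN⟩ := exists_nat_ge (1 / t)
    filter_upwards [eventually_ge_atTop N] with k hk
    have hkφ : (N : ℝ) ≤ (φ k : ℝ) := by
      exact_mod_cast le_trans hk (hφ.le_apply)
    have hωx : ω (φ k) - x = (1 / ((φ k : ℝ) + 1)) • f (φ k) := by
      rw [hxe (φ k)]; abel
    rw [hωx, smul_smul]
    set c : ℝ := t⁻¹ * (1 / ((φ k : ℝ) + 1)) with hc
    have hφpos : (0 : ℝ) < (φ k : ℝ) + 1 := by positivity
    have hc0 : 0 ≤ c := by positivity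
    have hc1 : c ≤ 1 := by
      rw [hc, ← one_div, div_mul_div_comm, one_mul, div_le_one (by positivity)]
      have h1 : 1 / t ≤ (φ k : ℝ) + 1 := by linarith
      calc (1:ℝ) = t * (1 / t) := by field_simp
        _ ≤ t * ((φ k : ℝ) + 1) := by
            exact mul_le_mul_of_nonneg_left h1 ht.le
    have := hconv (hf (φ k)) h0F hc0 (by linarith : (0:ℝ) ≤ 1 - c) (by ring)
    simpa using this
  · rintro ⟨ω, hω, d, hd, rfl⟩ ε hε
    simp only [mem_iInter, mem_Ioi] at hd
    obtain ⟨f, hf, hfd⟩ := hd ε hε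
    exact ⟨ω, hω, f, hf, by rw [← hfd]⟩
end

section
/- Let F be a convex subset of a Hausdorff locally convex topological vector space X with 0 ∈ int(F), and let Ω be a nonempty subset of X. Then T_Ω^F(x) = inf_{w ∈ Ω} ρ_F(w − x) for all x ∈ X, where ρ_F is the Minkowski gauge of F. -/
open Set Filter Topology Pointwise

variable {X : Type*} [AddCommGroup X] [Module ℝ X] [TopologicalSpace X]
  [IsTopologicalAddGroup X] [ContinuousSMul ℝ X] [T2Space X] [LocallyConvexSpace ℝ X]

/-- The set of admissible times in the definition of the minimal time function. -/
def timeSet (F Ω : Set X) (x : X) : Set ℝ := {t : ℝ | 0 < t ∧ ∃ f ∈ F, x + t • f ∈ Ω}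

/-- The minimal time function with target Ω and constant dynamics F. -/
noncomputable def minTime (F Ω : Set X) (x : X) : ℝ := sInf (timeSet F Ω x)

/-- The minimal time function is the infimum of the Minkowski gauge over the target. -/
theorem minTime_eq_inf_gauge (F Ω : Set X) (hconv : Convex ℝ F) (h0 : (0 : X) ∈ interior F)
    (hΩ : Ω.Nonempty) (x : X) :
    minTime F Ω x = sInf ((fun w => gauge F (w - x)) '' Ω) := by
  have habs : Absorbent ℝ F := absorbent_nhds_zero (mem_interior_iff_mem_nhds.1 h0)
  set S : X → Set ℝ := fun w => {r : ℝ | 0 < r ∧ w - x ∈ r • F} with hS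
  have hSne : ∀ w, (S w).Nonempty := fun w => habs.gauge_set_nonempty
  have hSbdd : ∀ w, BddBelow (S w) := fun w => ⟨0, fun r hr => hr.1.le⟩
  have hgauge : ∀ w, gauge F (w - x) = sInf (S w) := fun w => rfl
  have hts : timeSet F Ω x = ⋃ w ∈ Ω, S w := by
    ext t
    simp only [timeSet, mem_setOf_eq, mem_iUnion, hS]
    constructor
    · rintro ⟨ht, f, hf, hw⟩
      refine ⟨x + t • f, hw, ht, ?_⟩
      have : x + t • f - x = t • f := by abel
      rw [this]
      exact Set.smul_mem_smul_set hf
    · rintro ⟨w, hw, ht, hy⟩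
      obtain ⟨f, hf, hfe⟩ := Set.mem_smul_set.1 hy
      refine ⟨ht, f, hf, ?_⟩
      have : w = x + t • f := by rw [hfe]; abel
      rwa [← this]
  have hU : (⋃ w ∈ Ω, S w).Nonempty := by
    obtain ⟨w, hw⟩ := hΩ
    obtain ⟨r, hr⟩ := hSne w
    exact ⟨r, mem_iUnion₂.2 ⟨w, hw, hr⟩⟩
  have hUbdd : BddBelow (⋃ w ∈ Ω, S w) := by
    refine ⟨0, fun r hr => ?_⟩
    obtain ⟨w, _, hrw⟩ := mem_iUnion₂.1 hr
    exact hrw.1.le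
  rw [minTime, hts]
  apply le_antisymm
  · refine le_csInf ((hΩ.image _)) ?_
    rintro b ⟨w, hw, rfl⟩
    show sInf (⋃ w ∈ Ω, S w) ≤ gauge F (w - x)
    rw [hgauge w]
    exact csInf_le_csInf hUbdd (hSne w) fun r hr => mem_iUnion₂.2 ⟨w, hw, hr⟩
  · refine le_csInf hU fun t ht => ?_
    obtain ⟨w, hw, hrw⟩ := mem_iUnion₂.1 ht
    calc sInf ((fun w => gauge F (w - x)) '' Ω) ≤ gauge F (w - x) := by
          refine csInf_le ⟨0, ?_⟩ (mem_image_of_mem _ hw)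
          rintro b ⟨v, _, rfl⟩
          exact gauge_nonneg _
      _ ≤ t := by rw [hgauge w]; exact csInf_le (hSbdd w) hrw
end

section
/- Let F be a convex subset of a Hausdorff locally convex topological vector space X with 0 ∈ int(F), and let Ω be a nonempty subset of X. Then T_Ω^F(x) = T_{cl(Ω)}^F(x) for all x ∈ X, i.e., the minimal time functions with target Ω and with target the closure of Ω coincide. -/
open Set Filter Topology Pointwise

variable {X : Type*} [AddCommGroup X] [Module ℝ X] [TopologicalSpace X]
  [IsTopologicalAddGroup X] [ContinuousSMul ℝ X] [T2Space X] [LocallyConvexSpace ℝ X]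

set_option linter.unusedSectionVars false in
private lemma key_mem (F Ω : Set X) (hconv : Convex ℝ F) (h0 : (0 : X) ∈ interior F)
    {x : X} {t s : ℝ} (ht : t ∈ timeSet F (closure Ω) x) (hs : t < s) :
    s ∈ timeSet F Ω x := by
  obtain ⟨htpos, f, hf, hy⟩ := ht
  have hspos : (0 : ℝ) < s := htpos.trans hs
  have hst : (0 : ℝ) < s - t := sub_pos.2 hs
  set y := x + t • f with hy_def
  have hV : (s - t) • interior F ∈ 𝓝 (0 : X) := by
    refine (IsOpen.smul₀ isOpen_interior hst.ne').mem_nhds ?_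
    exact ⟨0, h0, smul_zero _⟩
  have hnb : (fun v => y + v) '' ((s - t) • interior F) ∈ 𝓝 y := by
    have := (Homeomorph.addLeft y).isOpenMap.image_mem_nhds hV
    simpa using this
  obtain ⟨z, hz1, hz2⟩ := mem_closure_iff_nhds.1 hy _ hnb
  obtain ⟨w, ⟨u, hu, rfl⟩, rfl⟩ := hz1
  refine ⟨hspos, (t / s) • f + ((s - t) / s) • u, ?_, ?_⟩
  · exact hconv hf (interior_subset hu) (by positivity) (by positivity)
      (by field_simp; ring)
  · have : x + s • ((t / s) • f + ((s - t) / s) • u) = y + (s - t) • u := by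
      simp only [hy_def, smul_add, smul_smul]
      rw [mul_div_cancel₀ _ hspos.ne', mul_div_cancel₀ _ hspos.ne']
      abel
    rw [this]; exact hz2

/-- The minimal time functions with target Ω and with target the closure of Ω coincide. -/
theorem minTime_closure (F Ω : Set X) (hconv : Convex ℝ F) (h0 : (0 : X) ∈ interior F)
    (hΩ : Ω.Nonempty) (x : X) :
    minTime F Ω x = minTime F (closure Ω) x := by
  have hbdd : ∀ S : Set X, BddBelow (timeSet F S x) := fun S => ⟨0, fun t ht => ht.1.le⟩
  have hmono : timeSet F Ω x ⊆ timeSet F (closure Ω) x := fun t ⟨h1, f, hf, h2⟩ =>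
    ⟨h1, f, hf, subset_closure h2⟩
  rcases (timeSet F Ω x).eq_empty_or_nonempty with he | hne
  · have he' : timeSet F (closure Ω) x = ∅ := by
      by_contra h
      obtain ⟨t, ht⟩ := nonempty_iff_ne_empty.2 h
      exact absurd (key_mem F Ω hconv h0 ht (lt_add_one t)) (by simp [he])
    simp [minTime, he, he']
  · refine le_antisymm ?_ (csInf_le_csInf (hbdd _) hne hmono)
    refine le_csInf (hne.mono hmono) fun t ht => ?_
    refine le_of_forall_gt_imp_ge_of_dense fun s hs => ?_
    exact csInf_le (hbdd _) (key_mem F Ω hconv h0 ht hs)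
end

section
/- Let F be a convex subset of a Hausdorff locally convex topological vector space X with 0 ∈ int(F), and let Ω be a nonempty subset of X. Then for all x, y ∈ X: |T_Ω^F(x) − T_Ω^F(y)| ≤ max{ρ_F(y − x), ρ_F(x − y)}. Consequently T_Ω^F is continuous on X. -/
open Set Filter Topology Pointwise

variable {X : Type*} [AddCommGroup X] [Module ℝ X] [TopologicalSpace X]
  [IsTopologicalAddGroup X] [ContinuousSMul ℝ X] [T2Space X] [LocallyConvexSpace ℝ X]

lemma mem_smul_of_gauge_lt {F : Set X} (hconv : Convex ℝ F) (h0 : (0 : X) ∈ interior F)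
    {z : X} {s : ℝ} (hs : gauge F z < s) : ∃ f ∈ F, z = s • f := by
  have habs : Absorbent ℝ F := absorbent_nhds_zero (mem_interior_iff_mem_nhds.1 h0)
  obtain ⟨b, hb0, hbs, f, hf, rfl⟩ := exists_lt_of_gauge_lt habs hs
  have hs0 : 0 < s := hb0.trans hbs
  refine ⟨(b / s) • f, ?_, ?_⟩
  · have := hconv (interior_subset h0) hf (a := 1 - b / s) (b := b / s)
      (by have : b / s ≤ 1 := by
            rw [div_le_one hs0]; exact hbs.le
          linarith)
      (by positivity) (by ring)
    simpa using this
  · rw [smul_smul, mul_div_cancel₀ _ hs0.ne']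

lemma timeSet_nonempty {F Ω : Set X} (hconv : Convex ℝ F) (h0 : (0 : X) ∈ interior F)
    (hΩ : Ω.Nonempty) (x : X) : (timeSet F Ω x).Nonempty := by
  obtain ⟨ω, hω⟩ := hΩ
  set t : ℝ := max 1 (gauge F (ω - x) + 1) with ht
  have ht1 : gauge F (ω - x) < t := lt_of_lt_of_le (by linarith) (le_max_right _ _)
  obtain ⟨f, hf, hzf⟩ := mem_smul_of_gauge_lt hconv h0 ht1
  exact ⟨t, lt_of_lt_of_le one_pos (le_max_left _ _), f, hf, by rw [← hzf]; simpa using hω⟩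

lemma timeSet_bddBelow (F Ω : Set X) (x : X) : BddBelow (timeSet F Ω x) :=
  ⟨0, fun t ht => ht.1.le⟩

/-- Key one-sided estimate. -/
lemma minTime_le (F Ω : Set X) (hconv : Convex ℝ F) (h0 : (0 : X) ∈ interior F)
    (hΩ : Ω.Nonempty) (x y : X) :
    minTime F Ω x ≤ minTime F Ω y + gauge F (y - x) := by
  have hne := timeSet_nonempty hconv h0 hΩ y
  rw [minTime, ← sub_le_iff_le_add]
  refine le_csInf hne fun t ht => ?_
  rw [sub_le_iff_le_add]
  -- show sInf (timeSet F Ω x) ≤ t + gauge F (y - x)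
  refine le_of_forall_pos_le_add fun ε hε => ?_
  obtain ⟨ht0, f, hf, hfy⟩ := ht
  have hg : gauge F (y - x) < gauge F (y - x) + ε := by linarith
  obtain ⟨g, hg', hzg⟩ := mem_smul_of_gauge_lt hconv h0 hg
  set s : ℝ := gauge F (y - x) + ε with hs
  have hs0 : 0 < s := lt_of_lt_of_le hε (le_add_of_nonneg_left (gauge_nonneg _))
  have hts : 0 < t + s := by positivity
  have hmem : t + s ∈ timeSet F Ω x := by
    refine ⟨hts, (t / (t + s)) • f + (s / (t + s)) • g, ?_, ?_⟩
    · exact hconv hf hg' (by positivity) (by positivity)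
        (by field_simp)
    · have : x + (t + s) • ((t / (t + s)) • f + (s / (t + s)) • g)
          = x + t • f + s • g := by
        rw [smul_add, smul_smul, smul_smul, mul_div_cancel₀ _ hts.ne',
          mul_div_cancel₀ _ hts.ne', add_assoc]
      rw [this, ← hzg]
      have : x + t • f + (y - x) = y + t • f := by abel
      rw [this]; exact hfy
  calc sInf (timeSet F Ω x) ≤ t + s := csInf_le (timeSet_bddBelow F Ω x) hmem
    _ = t + gauge F (y - x) + ε := by rw [hs]; ring

/-- Estimate of the variation of the minimal time function via the Minkowski gauge,
together with its continuity. -/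
theorem minTime_gauge_estimate (F Ω : Set X) (hconv : Convex ℝ F)
    (h0 : (0 : X) ∈ interior F) (hΩ : Ω.Nonempty) :
    (∀ x y : X, |minTime F Ω x - minTime F Ω y| ≤ max (gauge F (y - x)) (gauge F (x - y))) ∧
      Continuous (minTime F Ω) := by
  have key : ∀ x y : X, |minTime F Ω x - minTime F Ω y|
      ≤ max (gauge F (y - x)) (gauge F (x - y)) := by
    intro x y
    rw [abs_sub_le_iff]
    constructor
    · have := minTime_le F Ω hconv h0 hΩ x y
      have h2 : gauge F (y - x) ≤ max (gauge F (y - x)) (gauge F (x - y)) := le_max_left _ _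
      linarith
    · have := minTime_le F Ω hconv h0 hΩ y x
      have h2 : gauge F (x - y) ≤ max (gauge F (y - x)) (gauge F (x - y)) := le_max_right _ _
      linarith
  refine ⟨key, ?_⟩
  rw [continuous_iff_continuousAt]
  intro x₀
  have hF0 : F ∈ 𝓝 (0 : X) := mem_interior_iff_mem_nhds.1 h0
  have hgc : Continuous (gauge F) := continuous_gauge hconv hF0
  have hb : Tendsto (fun x => max (gauge F (x₀ - x)) (gauge F (x - x₀))) (𝓝 x₀) (𝓝 0) := by
    have c1 : Continuous fun x : X => gauge F (x₀ - x) :=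
      hgc.comp (continuous_const.sub continuous_id)
    have c2 : Continuous fun x : X => gauge F (x - x₀) :=
      hgc.comp (continuous_id.sub continuous_const)
    have h1 : Tendsto (fun x => gauge F (x₀ - x)) (𝓝 x₀) (𝓝 0) := by
      simpa [gauge_zero] using c1.tendsto x₀
    have h2 : Tendsto (fun x => gauge F (x - x₀)) (𝓝 x₀) (𝓝 0) := by
      simpa [gauge_zero] using c2.tendsto x₀
    simpa using h1.max h2
  rw [ContinuousAt, tendsto_iff_norm_sub_tendsto_zero]
  refine squeeze_zero (fun x => norm_nonneg _) (fun x => ?_) hb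
  simpa [Real.norm_eq_abs] using key x x₀
end

section
/- Let F be a convex subset of a Hausdorff locally convex topological vector space X with 0 ∈ int(F), and let Ω be a nonempty convex subset of X. Then for every x̄ ∈ Ω, the convex subdifferential of T_Ω^F at x̄ equals N(x̄; Ω) ∩ C*, where C* := {x* ∈ X* | σ_F(−x*) ≤ 1} and σ_F is the support function of F. -/
open Set Filter Topology Pointwise

variable {X : Type*} [AddCommGroup X] [Module ℝ X] [TopologicalSpace X]
  [IsTopologicalAddGroup X] [ContinuousSMul ℝ X] [T2Space X] [LocallyConvexSpace ℝ X]

/-- The convex subdifferential of the minimal time function at a point. -/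
def subdiffMinTime (F Ω : Set X) (x₀ : X) : Set (X →L[ℝ] ℝ) :=
  {p : X →L[ℝ] ℝ | ∀ x : X, p (x - x₀) ≤ minTime F Ω x - minTime F Ω x₀}

/-- The normal cone to a set A at x₀. -/
def normalCone (A : Set X) (x₀ : X) : Set (X →L[ℝ] ℝ) :=
  {p : X →L[ℝ] ℝ | ∀ x ∈ A, p (x - x₀) ≤ 0}

/-- Subdifferential of the minimal time function at target points:
∂T_Ω^F(x̄) = N(x̄; Ω) ∩ C*, where C* = {x* | σ_F(−x*) ≤ 1}. -/
theorem subdiff_minTime_at_target (F Ω : Set X) (hconv : Convex ℝ F)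
    (h0 : (0 : X) ∈ interior F) (hΩne : Ω.Nonempty) (hΩ : Convex ℝ Ω)
    (x₀ : X) (hx₀ : x₀ ∈ Ω) :
    subdiffMinTime F Ω x₀ =
      normalCone Ω x₀ ∩ {p : X →L[ℝ] ℝ | ∀ f ∈ F, -(p f) ≤ 1} := by
  have h0F : (0 : X) ∈ F := interior_subset h0
  have hbdd : ∀ x : X, BddBelow (timeSet F Ω x) :=
    fun x => ⟨0, fun t ht => le_of_lt ht.1⟩
  -- minTime vanishes on Ω
  have hTzero : ∀ x ∈ Ω, minTime F Ω x = 0 := by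
    intro x hx
    have hset : timeSet F Ω x = Ioi 0 := by
      ext t
      constructor
      · rintro ⟨ht, -⟩; exact ht
      · intro ht; exact ⟨ht, 0, h0F, by simpa using hx⟩
    rw [minTime, hset, csInf_Ioi]
  -- the time set is always nonempty (F is absorbing)
  have hne : ∀ x : X, (timeSet F Ω x).Nonempty := by
    intro x
    have hcont : Continuous fun t : ℝ => t • (x₀ - x) := by continuity
    have hmem : ∀ᶠ t in 𝓝 (0 : ℝ), t • (x₀ - x) ∈ interior F := by
      exact hcont.continuousAt.eventually_mem
        (by simp only [zero_smul]; exact isOpen_interior.mem_nhds h0)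
    have hmem' : ∀ᶠ t in 𝓝[>] (0 : ℝ), t • (x₀ - x) ∈ interior F :=
      nhdsWithin_le_nhds hmem
    obtain ⟨ε, hεF, hεpos⟩ := (hmem'.and self_mem_nhdsWithin).exists
    refine ⟨ε⁻¹, inv_pos.mpr hεpos, ε • (x₀ - x), interior_subset hεF, ?_⟩
    have : ε⁻¹ • ε • (x₀ - x) = x₀ - x := by
      rw [smul_smul, inv_mul_cancel₀ (ne_of_gt hεpos), one_smul]
    rw [this]
    simpa using hx₀
  ext p
  simp only [subdiffMinTime, normalCone, mem_setOf_eq, mem_inter_iff]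
  constructor
  · intro hp
    refine ⟨fun x hx => ?_, fun f hf => ?_⟩
    · have := hp x
      rw [hTzero x hx, hTzero x₀ hx₀] at this
      linarith
    · have h1 : (1 : ℝ) ∈ timeSet F Ω (x₀ - f) := ⟨one_pos, f, hf, by simp [hx₀]⟩
      have hT1 : minTime F Ω (x₀ - f) ≤ 1 := csInf_le (hbdd _) h1
      have := hp (x₀ - f)
      rw [hTzero x₀ hx₀] at this
      have heq : p (x₀ - f - x₀) = -(p f) := by
        rw [show x₀ - f - x₀ = -f by abel, map_neg]
      rw [heq] at this
      linarith
  · rintro ⟨hN, hC⟩ x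
    rw [hTzero x₀ hx₀, sub_zero, minTime]
    refine le_csInf (hne x) ?_
    rintro t ⟨ht, f, hf, hmem⟩
    have h1 := hN _ hmem
    have h2 : p (x + t • f - x₀) = p (x - x₀) + t * p f := by
      rw [show x + t • f - x₀ = (x - x₀) + t • f by abel, map_add, map_smul]
      rfl
    have h3 := hC f hf
    nlinarith
end

section
/- Let F be a convex subset of a Hausdorff locally convex topological vector space X, and let Ω be nonempty. Fix r > 0 and define the expansion Ω_r := {x | T_Ω^F(x) ≤ r}. If x ∉ Ω_r and T_Ω^F(x) < ∞, then T_Ω^F(x) = T_{Ω_r}^F(x) + r. -/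
open Set Filter Topology Pointwise

variable {X : Type*} [AddCommGroup X] [Module ℝ X] [TopologicalSpace X]
  [IsTopologicalAddGroup X] [ContinuousSMul ℝ X] [T2Space X] [LocallyConvexSpace ℝ X]

/-- The extended-real-valued minimal time function with target Ω and dynamics F;
its value is +∞ when no admissible time exists. -/
noncomputable def minTimeE (F Ω : Set X) (x : X) : EReal :=
  sInf (Set.image (fun t : ℝ => (t : EReal)) (timeSet F Ω x))

lemma minTimeE_le_of_mem {F Ω : Set X} {x : X} {t : ℝ} (ht : t ∈ timeSet F Ω x) :
    minTimeE F Ω x ≤ (t : EReal) :=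
  sInf_le ⟨t, ht, rfl⟩

lemma minTimeE_nonneg (F Ω : Set X) (x : X) : (0 : EReal) ≤ minTimeE F Ω x := by
  refine le_sInf ?_
  rintro e ⟨t, ht, rfl⟩
  show (0 : EReal) ≤ (t : EReal)
  exact_mod_cast ht.1.le

/-- concatenation of admissible motions via convexity of F -/
lemma timeSet_add {F Ω : Set X} {x : X} {t s : ℝ} {f g : X}
    (hconv : Convex ℝ F) (ht : 0 < t) (hs : 0 < s) (hf : f ∈ F) (hg : g ∈ F)
    (hmem : (x + t • f) + s • g ∈ Ω) : t + s ∈ timeSet F Ω x := by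
  have hts : (0:ℝ) < t + s := by linarith
  have hc : t / (t + s) + s / (t + s) = 1 := by field_simp
  have hmemF : (t / (t + s)) • f + (s / (t + s)) • g ∈ F :=
    hconv hf hg (div_nonneg ht.le hts.le) (div_nonneg hs.le hts.le) hc
  refine ⟨hts, _, hmemF, ?_⟩
  have h1 : (t + s) * (t / (t + s)) = t := by field_simp
  have h2 : (t + s) * (s / (t + s)) = s := by field_simp
  rw [smul_add, smul_smul, smul_smul, h1, h2, ← add_assoc]
  exact hmem

/-- For r > 0 and x outside the expansion Ω_r with T_Ω^F(x) finite, one has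
T_Ω^F(x) = T_{Ω_r}^F(x) + r. -/
theorem minTime_expansion (F Ω : Set X) (hconv : Convex ℝ F) (hΩ : Ω.Nonempty)
    (r : ℝ) (hr : 0 < r) (x : X)
    (hx : x ∉ {y : X | minTimeE F Ω y ≤ (r : EReal)})
    (hfin : minTimeE F Ω x < ⊤) :
    minTimeE F Ω x = minTimeE F {y : X | minTimeE F Ω y ≤ (r : EReal)} x + (r : EReal) := by
  set Ωr : Set X := {y : X | minTimeE F Ω y ≤ (r : EReal)} with hΩr
  have hA0 : (0 : EReal) ≤ minTimeE F Ω x := minTimeE_nonneg F Ω x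
  have hAbot : minTimeE F Ω x ≠ ⊥ := fun h => by simp [h] at hA0
  obtain ⟨a, ha⟩ : ∃ a : ℝ, minTimeE F Ω x = (a : EReal) :=
    ⟨(minTimeE F Ω x).toReal, (EReal.coe_toReal hfin.ne hAbot).symm⟩
  have hrx : (r : EReal) < minTimeE F Ω x := lt_of_not_ge hx
  have hra : r < a := by rw [ha] at hrx; exact_mod_cast hrx
  -- ≥ : B + r ≤ A
  have hge : minTimeE F Ωr x + (r : EReal) ≤ minTimeE F Ω x := by
    rw [minTimeE]
    refine le_sInf ?_
    rintro e ⟨t, ⟨htpos, f, hf, hft⟩, rfl⟩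
    show minTimeE F Ωr x + (r : EReal) ≤ (t : EReal)
    have hat : a ≤ t := by
      have := minTimeE_le_of_mem (F := F) (Ω := Ω) (x := x) ⟨htpos, f, hf, hft⟩
      rw [ha] at this; exact_mod_cast this
    have hrt : r < t := lt_of_lt_of_le hra hat
    have hmem1 : t - r ∈ timeSet F Ωr x := by
      refine ⟨by linarith, f, hf, ?_⟩
      have : r ∈ timeSet F Ω (x + (t - r) • f) := by
        refine ⟨hr, f, hf, ?_⟩
        rw [add_assoc, ← add_smul, sub_add_cancel]
        exact hft
      exact minTimeE_le_of_mem this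
    have hB : minTimeE F Ωr x ≤ ((t - r : ℝ) : EReal) := minTimeE_le_of_mem hmem1
    calc minTimeE F Ωr x + (r : EReal) ≤ ((t - r : ℝ) : EReal) + (r : EReal) := by
          exact add_le_add_left hB _
      _ = (t : EReal) := by rw [← EReal.coe_add]; norm_num
  -- ≤ : A ≤ B + r
  have hle : minTimeE F Ω x ≤ minTimeE F Ωr x + (r : EReal) := by
    -- for each t ∈ timeSet F Ωr x, a ≤ t + r
    have key : ∀ t ∈ timeSet F Ωr x, a ≤ t + r := by
      rintro t ⟨htpos, f, hf, hft⟩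
      refine le_of_forall_pos_le_add ?_
      intro ε hε
      have hlt : minTimeE F Ω (x + t • f) < ((r + ε : ℝ) : EReal) :=
        lt_of_le_of_lt hft (by exact_mod_cast (by linarith : r < r + ε))
      obtain ⟨e, ⟨s, hs, rfl⟩, hse⟩ := sInf_lt_iff.mp hlt
      have hse' : (s : EReal) < ((r + ε : ℝ) : EReal) := hse
      have hsre : s < r + ε := by exact_mod_cast hse'
      obtain ⟨hspos, g, hg, hsg⟩ := hs
      have hts : t + s ∈ timeSet F Ω x := timeSet_add hconv htpos hspos hf hg hsg
      have := minTimeE_le_of_mem hts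
      rw [ha] at this
      have hats : a ≤ t + s := by exact_mod_cast this
      linarith
    rw [ha]
    rcases eq_or_ne (minTimeE F Ωr x) ⊤ with hB | hB
    · rw [hB]; simp
    have hB0 : (0 : EReal) ≤ minTimeE F Ωr x := minTimeE_nonneg F Ωr x
    have hBbot : minTimeE F Ωr x ≠ ⊥ := fun h => by simp [h] at hB0
    obtain ⟨b, hb⟩ : ∃ b : ℝ, minTimeE F Ωr x = (b : EReal) :=
      ⟨(minTimeE F Ωr x).toReal, (EReal.coe_toReal hB hBbot).symm⟩
    have hab : ((a - r : ℝ) : EReal) ≤ minTimeE F Ωr x := by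
      refine le_sInf ?_
      rintro e ⟨t, ht, rfl⟩
      have := key t ht
      show ((a - r : ℝ) : EReal) ≤ (t : EReal)
      exact_mod_cast (by linarith : a - r ≤ t)
    rw [hb] at hab ⊢
    have : a - r ≤ b := by exact_mod_cast hab
    rw [← EReal.coe_add]
    exact_mod_cast (by linarith : a ≤ b + r)
  exact le_antisymm hle hge
end

section
/- Let Ω be a proper, closed, convex subset of ℝⁿ with the Euclidean norm. If x̄ lies in the interior of Ω and w̄ is a Euclidean projection of x̄ onto the closure of the complement Ωᶜ (i.e., w̄ ∈ cl(Ωᶜ) with ‖x̄ − w̄‖ = d(x̄; cl(Ωᶜ))), then w̄ − x̄ ∈ N(w̄; Ω), the normal cone to Ω at w̄. -/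
open Set Metric

/-- If xb is an interior point of a proper closed convex set Ω ⊆ ℝⁿ and wb is a Euclidean
projection of xb onto the closure of the complement Ωᶜ, then wb − xb belongs to the normal
cone to Ω at wb. -/
theorem proj_sub_mem_normalCone {n : ℕ} (Ω : Set (EuclideanSpace ℝ (Fin n)))
    (hΩne : Ω.Nonempty) (hΩcne : Ωᶜ.Nonempty) (hcl : IsClosed Ω) (hconv : Convex ℝ Ω)
    (xb wb : EuclideanSpace ℝ (Fin n)) (hxb : xb ∈ interior Ω)
    (hwb : wb ∈ closure Ωᶜ) (hproj : ‖xb - wb‖ = Metric.infDist xb (closure Ωᶜ)) :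
    ∀ x ∈ Ω, inner ℝ (wb - xb) (x - wb) ≤ (0 : ℝ) := by
  intro x hx
  by_contra hcon
  push_neg at hcon
  set v := wb - xb with hv
  set c : ℝ := inner ℝ v (x - wb) with hcdef
  set r : ℝ := Metric.infDist xb (closure Ωᶜ) with hr
  have hr0 : 0 ≤ r := Metric.infDist_nonneg
  have hball : Metric.ball xb r ⊆ Ω := by
    intro y hy
    by_contra hy'
    have h1 : Metric.infDist xb (closure Ωᶜ) ≤ dist xb y :=
      Metric.infDist_le_dist_of_mem (subset_closure hy')
    rw [Metric.mem_ball, dist_comm] at hy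
    rw [← hr] at h1
    linarith
  have hballi : Metric.ball xb r ⊆ interior Ω :=
    interior_maximal hball Metric.isOpen_ball
  set M : ℝ := ‖x - xb‖ ^ 2 with hM
  set t : ℝ := min (1 / 2) (c / (1 + |M - r ^ 2|)) with htdef
  have ht0 : 0 < t := lt_min (by norm_num) (div_pos hcon (by positivity))
  have ht1 : t < 1 := lt_of_le_of_lt (min_le_left _ _) (by norm_num)
  have h1t : (0 : ℝ) < 1 - t := by linarith
  have hkey : t * (M - r ^ 2) < c := by
    have h1 : t * (M - r ^ 2) ≤ t * |M - r ^ 2| := by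
      nlinarith [le_abs_self (M - r ^ 2), ht0.le]
    have h2 : t * |M - r ^ 2| ≤ (c / (1 + |M - r ^ 2|)) * |M - r ^ 2| :=
      mul_le_mul_of_nonneg_right (min_le_right _ _) (abs_nonneg _)
    have h3 : (c / (1 + |M - r ^ 2|)) * |M - r ^ 2| < c := by
      rw [div_mul_eq_mul_div, div_lt_iff₀ (by positivity)]
      nlinarith [abs_nonneg (M - r ^ 2)]
    linarith
  set z := (1 - t)⁻¹ • (wb - t • x) with hz
  have hcombo : (1 - t) • z + t • x = wb := by
    rw [hz, smul_inv_smul₀ (by linarith : (1 : ℝ) - t ≠ 0)]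
    abel
  have hzxb : z - xb = (1 - t)⁻¹ • (v - t • (x - xb)) := by
    rw [hz, hv]
    have h1t' : (1 : ℝ) - t ≠ 0 := by linarith
    match_scalars <;> (field_simp; try ring)
  have hvr : ‖v‖ = r := by rw [hv, ← norm_sub_rev]; exact hproj
  have hinner : inner ℝ v (x - xb) = c + r ^ 2 := by
    have : x - xb = (x - wb) + v := by rw [hv]; abel
    rw [this, inner_add_right, ← hcdef, real_inner_self_eq_norm_sq, hvr]
  have expand : ‖v - t • (x - xb)‖ ^ 2 = r ^ 2 - 2 * t * (c + r ^ 2) + t ^ 2 * M := by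
    rw [@norm_sub_sq_real, real_inner_smul_right, hinner, norm_smul, hvr, hM]
    rw [Real.norm_eq_abs, abs_of_pos ht0]
    ring
  have hs : ‖v - t • (x - xb)‖ < (1 - t) * r := by
    have hsq : ‖v - t • (x - xb)‖ ^ 2 < ((1 - t) * r) ^ 2 := by
      rw [expand]
      nlinarith [hkey, ht0]
    exact lt_of_pow_lt_pow_left₀ 2 (by positivity) hsq
  have hnorm : ‖z - xb‖ < r := by
    calc ‖z - xb‖ = (1 - t)⁻¹ * ‖v - t • (x - xb)‖ := by
          rw [hzxb, norm_smul, Real.norm_eq_abs, abs_of_pos (inv_pos.2 h1t)]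
      _ < (1 - t)⁻¹ * ((1 - t) * r) := by
          exact mul_lt_mul_of_pos_left hs (inv_pos.2 h1t)
      _ = r := by field_simp
  have hzint : z ∈ interior Ω := hballi (by
    rw [Metric.mem_ball, dist_eq_norm]; exact hnorm)
  have hwint : wb ∈ interior Ω := by
    rw [← hcombo]
    exact hconv.combo_interior_self_mem_interior hzint hx h1t ht0.le (by ring)
  rw [closure_compl] at hwb
  exact hwb hwint
end
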